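/- arXiv:2207.12061 — 4 statements merged into one kernel-verified Lean document; each statement's English description precedes it below -/
import Mathlib

section
/- Let a feedforward network with arbitrary activations be given, with a weight configuration W = (W_1, …, W_L) and updates ΔW = (ΔW_1, …, ΔW_L). Let S ⊆ ℝ^{d_0} be a set of inputs. If for every layer l ∈ {1, …, L} and every x ∈ S the update annihilates the layer features, i.e. h_{l−1}(W, x) · ΔW_l = 0 (the zero row vector in ℝ^{d_l}), then for every layer l and every x ∈ S one has h_l(W + ΔW, x) = h_l(W, x), where W + ΔW denotes layerwise addition; in particular the network outputs agree: N(W + ΔW, x) = N(W, x) for all x ∈ S. -/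
/-- The feature map of a feedforward network with arbitrary activations:
`feature d σ W x l` is the feature of the `l`-th layer (`l = 0` gives the input `x`),
where `h_{l+1} = σ_l (h_l ⬝ W_l)` (row-vector–matrix product). -/
def feature (d : ℕ → ℕ)
    (σ : ∀ l : ℕ, (Fin (d (l + 1)) → ℝ) → (Fin (d (l + 1)) → ℝ))
    (W : ∀ l : ℕ, Matrix (Fin (d l)) (Fin (d (l + 1))) ℝ)
    (x : Fin (d 0) → ℝ) : (l : ℕ) → (Fin (d l) → ℝ)
  | 0 => x
  | l + 1 => σ l (Matrix.vecMul (feature d σ W x l) (W l))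

/-- If every layerwise update annihilates the corresponding layer features on a set `S`
of inputs, then all features (and in particular the network output, i.e. the feature of
the last layer `L`) are unchanged by the update. -/
theorem statement0 (L : ℕ) (hL : 1 ≤ L) (d : ℕ → ℕ)
    (σ : ∀ l : ℕ, (Fin (d (l + 1)) → ℝ) → (Fin (d (l + 1)) → ℝ))
    (W ΔW : ∀ l : ℕ, Matrix (Fin (d l)) (Fin (d (l + 1))) ℝ)
    (S : Set (Fin (d 0) → ℝ))
    (hnull : ∀ l < L, ∀ x ∈ S, Matrix.vecMul (feature d σ W x l) (ΔW l) = 0) :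
    (∀ l ≤ L, ∀ x ∈ S,
        feature d σ (fun l => W l + ΔW l) x l = feature d σ W x l) ∧
    (∀ x ∈ S, feature d σ (fun l => W l + ΔW l) x L = feature d σ W x L) := by
  have key : ∀ l ≤ L, ∀ x ∈ S,
      feature d σ (fun l => W l + ΔW l) x l = feature d σ W x l := by
    intro l
    induction l with
    | zero => intro _ x _; rfl
    | succ n ih =>
      intro hn x hx
      have hn' : n ≤ L := Nat.le_of_succ_le hn
      have := ih hn' x hx
      show σ n (Matrix.vecMul (feature d σ (fun l => W l + ΔW l) x n) (W n + ΔW n)) = _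
      rw [this, Matrix.vecMul_add, hnull n (Nat.lt_of_succ_le hn) x hx, add_zero]
      rfl
  exact ⟨key, fun x hx => key L le_rfl x hx⟩
end

section
/- Let E be a finite-dimensional real inner product space, let f : E → ℝ be L-smooth with L > 0, and let 0 < η ≤ 1/L. Let (Ω, μ) be a probability space and let V : Ω → E be an integrable random vector with mean m = ∫ V dμ, such that ω ↦ f(x − η V(ω)) and ω ↦ ‖V(ω) − m‖² are integrable. Then for every x ∈ E: (η/2)·‖∇f(x)‖² ≤ f(x) − ∫ f(x − η V(ω)) dμ(ω) + (L η²/2)·∫ ‖V(ω) − m‖² dμ(ω) + (η/2)·‖∇f(x) − m‖². -/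
open scoped RealInnerProductSpace
open MeasureTheory

/-- Stochastic descent lemma: for an `L`-smooth `f` on a finite-dimensional real inner
product space, step size `0 < η ≤ 1/L`, and an integrable random vector `V` on a
probability space with mean `m = ∫ V dμ`, such that `ω ↦ f (x - η • V ω)` and
`ω ↦ ‖V ω - m‖²` are integrable, we have for every `x`:
`(η/2)‖∇f(x)‖² ≤ f(x) - ∫ f(x - η V) dμ + (Lη²/2) ∫ ‖V - m‖² dμ + (η/2)‖∇f(x) - m‖²`. -/
theorem statement3 {E : Type*} [NormedAddCommGroup E] [InnerProductSpace ℝ E]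
    [FiniteDimensional ℝ E]
    (f : E → ℝ) (g : E → E) (L : ℝ) (hL : 0 < L)
    (hdiff : ∀ x : E, HasGradientAt f (g x) x)
    (hsmooth : ∀ v w : E, f w ≤ f v + ⟪g v, w - v⟫ + L / 2 * ‖w - v‖ ^ 2)
    (η : ℝ) (hη₀ : 0 < η) (hη : η ≤ 1 / L)
    {Ω : Type*} [MeasurableSpace Ω] (μ : Measure Ω) [IsProbabilityMeasure μ]
    (V : Ω → E) (hVint : Integrable V μ)
    (x : E)
    (hfint : Integrable (fun ω => f (x - η • V ω)) μ)
    (hvarint : Integrable (fun ω => ‖V ω - ∫ ω', V ω' ∂μ‖ ^ 2) μ) :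
    η / 2 * ‖g x‖ ^ 2 ≤
      f x - (∫ ω, f (x - η • V ω) ∂μ)
        + L * η ^ 2 / 2 * (∫ ω, ‖V ω - ∫ ω', V ω' ∂μ‖ ^ 2 ∂μ)
        + η / 2 * ‖g x - ∫ ω', V ω' ∂μ‖ ^ 2 := by
  set m : E := ∫ ω', V ω' ∂μ with hm
  set y : E := x - η • m with hy
  -- pointwise smoothness bound around y
  have hpt : ∀ ω, f (x - η • V ω) ≤
      f y + ⟪g y, (-η) • (V ω - m)⟫ + L / 2 * (η ^ 2 * ‖V ω - m‖ ^ 2) := by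
    intro ω
    have h := hsmooth y (x - η • V ω)
    have hsub : (x - η • V ω) - y = (-η) • (V ω - m) := by
      simp [hy, smul_sub]; abel
    rw [hsub] at h
    calc f (x - η • V ω) ≤ f y + ⟪g y, (-η) • (V ω - m)⟫ + L / 2 * ‖(-η) • (V ω - m)‖ ^ 2 := h
      _ = f y + ⟪g y, (-η) • (V ω - m)⟫ + L / 2 * (η ^ 2 * ‖V ω - m‖ ^ 2) := by
          rw [norm_smul, mul_pow]
          simp [abs_of_pos hη₀]
  have hVm : Integrable (fun ω => V ω - m) μ := hVint.sub (integrable_const m)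
  have hW : Integrable (fun ω => (-η) • (V ω - m)) μ := by
    exact hVm.smul (-η)
  have hlin : Integrable (fun ω => ⟪g y, (-η) • (V ω - m)⟫) μ := hW.const_inner (g y)
  have h1 : Integrable (fun ω => f y + ⟪g y, (-η) • (V ω - m)⟫) μ := by
    simpa using (integrable_const (f y)).add hlin
  have h2 : Integrable (fun ω => L / 2 * (η ^ 2 * ‖V ω - m‖ ^ 2)) μ := by
    simpa only [← mul_assoc] using hvarint.const_mul (L / 2 * η ^ 2)
  have hRint : Integrable
      (fun ω => f y + ⟪g y, (-η) • (V ω - m)⟫ + L / 2 * (η ^ 2 * ‖V ω - m‖ ^ 2)) μ :=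
    h1.add h2
  have hmono : ∫ ω, f (x - η • V ω) ∂μ ≤
      ∫ ω, (f y + ⟪g y, (-η) • (V ω - m)⟫ + L / 2 * (η ^ 2 * ‖V ω - m‖ ^ 2)) ∂μ :=
    integral_mono hfint hRint hpt
  have hVm0 : ∫ ω, (V ω - m) ∂μ = 0 := by
    rw [integral_sub hVint (integrable_const m), integral_const]
    simp [hm]
  have hlin0 : ∫ ω, ⟪g y, (-η) • (V ω - m)⟫ ∂μ = 0 := by
    rw [integral_inner hW, integral_smul, hVm0, smul_zero, inner_zero_right]
  have hsplit : ∫ ω, (f y + ⟪g y, (-η) • (V ω - m)⟫ + L / 2 * (η ^ 2 * ‖V ω - m‖ ^ 2)) ∂μ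
      = f y + L * η ^ 2 / 2 * ∫ ω, ‖V ω - m‖ ^ 2 ∂μ := by
    rw [integral_add h1 h2, integral_add (integrable_const (f y)) hlin, hlin0, integral_const,
      integral_const_mul, integral_const_mul]
    simp
    ring
  have hIntLe : ∫ ω, f (x - η • V ω) ∂μ ≤ f y + L * η ^ 2 / 2 * ∫ ω, ‖V ω - m‖ ^ 2 ∂μ := by
    rw [← hsplit]; exact hmono
  -- descent step at the mean
  have hdesc : f y ≤ f x - η * ⟪g x, m⟫ + η / 2 * ‖m‖ ^ 2 := by
    have h := hsmooth x y
    have hsub : y - x = (-η) • m := by simp [hy]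
    rw [hsub] at h
    have h1 : ⟪g x, (-η) • m⟫ = -η * ⟪g x, m⟫ := by
      rw [real_inner_smul_right]
    have h2 : ‖(-η) • m‖ ^ 2 = η ^ 2 * ‖m‖ ^ 2 := by
      rw [norm_smul, mul_pow]; simp [abs_of_pos hη₀]
    rw [h1, h2] at h
    have hLη : L * η ≤ 1 := by
      rw [le_div_iff₀ hL] at hη; linarith
    nlinarith [sq_nonneg ‖m‖, sq_nonneg η, mul_nonneg (sq_nonneg η) (sq_nonneg ‖m‖)]
  have hexp : ‖g x - m‖ ^ 2 = ‖g x‖ ^ 2 - 2 * ⟪g x, m⟫ + ‖m‖ ^ 2 := by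
    rw [norm_sub_sq_real]; try ring
  nlinarith [hIntLe, hdesc]
end

section
/- Let E = Π_{l=1}^{L} E_l be a finite product of finite-dimensional real inner product spaces with the ℓ² product inner product, let K_l ⊆ E_l be subspaces with orthogonal projections P_l : E_l → E_l, and let P : E → E act componentwise by (P v)_l = P_l(v_l). Let f : E → ℝ be L_f-smooth with L_f > 0, let 0 < η ≤ 1/L_f, and let the iterates be defined by w_{s+1} = w_s − η · P(∇f(w_s)) for s = 0, 1, …, S−1, starting from any w_0 ∈ E. Then f(w_S) ≤ f(w_0) + (η/2)·Σ_{s=0}^{S−1} Σ_{l=1}^{L} ‖(∇f(w_s))_l − P_l((∇f(w_s))_l)‖² − (η/2)·Σ_{s=0}^{S−1} ‖∇f(w_s)‖². -/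
open scoped RealInnerProductSpace

/-- The componentwise action of the projections `P l` on the `ℓ²` product space. -/
def componentwiseProj {L : ℕ} {E : Fin L → Type*}
    [∀ l, NormedAddCommGroup (E l)] [∀ l, InnerProductSpace ℝ (E l)]
    (P : ∀ l, E l →L[ℝ] E l) (v : PiLp 2 E) : PiLp 2 E :=
  WithLp.toLp 2 (fun l => P l (v l))

/-- Iterated descent lemma for projected gradients: if `f` is `L_f`-smooth on the `ℓ²`
product space `E = Π_l E_l`, `P_l` is the orthogonal projection onto `K_l ⊆ E_l`, and
`0 < η ≤ 1/L_f`, then the iterates `w_{s+1} = w_s - η • P(∇f(w_s))` satisfy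
`f(w_S) ≤ f(w_0) + (η/2) Σ_{s<S} Σ_l ‖(∇f(w_s))_l - P_l((∇f(w_s))_l)‖²
  - (η/2) Σ_{s<S} ‖∇f(w_s)‖²`. -/
theorem statement5 {L : ℕ} {E : Fin L → Type*}
    [∀ l, NormedAddCommGroup (E l)] [∀ l, InnerProductSpace ℝ (E l)]
    [∀ l, FiniteDimensional ℝ (E l)]
    (K : ∀ l, Submodule ℝ (E l)) (P : ∀ l, E l →L[ℝ] E l)
    (hPrange : ∀ l, LinearMap.range (P l : E l →ₗ[ℝ] E l) = K l)
    (hPorth : ∀ l, ∀ v : E l, v - P l v ∈ (K l)ᗮ)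
    (f : PiLp 2 E → ℝ) (g : PiLp 2 E → PiLp 2 E) (Lf : ℝ) (hLf : 0 < Lf)
    (hdiff : ∀ x, HasGradientAt f (g x) x)
    (hsmooth : ∀ v w : PiLp 2 E, f w ≤ f v + ⟪g v, w - v⟫ + Lf / 2 * ‖w - v‖ ^ 2)
    (η : ℝ) (hη₀ : 0 < η) (hη : η ≤ 1 / Lf)
    (w : ℕ → PiLp 2 E)
    (hstep : ∀ s : ℕ, w (s + 1) = w s - η • componentwiseProj P (g (w s)))
    (S : ℕ) :
    f (w S) ≤ f (w 0)
      + η / 2 * ∑ s ∈ Finset.range S, ∑ l, ‖g (w s) l - P l (g (w s) l)‖ ^ 2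
      - η / 2 * ∑ s ∈ Finset.range S, ‖g (w s)‖ ^ 2 := by
  -- orthogonality at each component
  have horth : ∀ l (x : E l), ⟪x - P l x, P l x⟫ = 0 := by
    intro l x
    have hmem : P l x ∈ K l := by
      rw [← hPrange l]; exact ⟨x, rfl⟩
    have h := (Submodule.mem_orthogonal (K l) _).mp (hPorth l x) (P l x) hmem
    rw [real_inner_comm]; exact h
  -- Pythagoras at each component
  have hpyth : ∀ l (x : E l), ‖x‖ ^ 2 = ‖P l x‖ ^ 2 + ‖x - P l x‖ ^ 2 := by
    intro l x
    have h := norm_add_sq_real (P l x) (x - P l x)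
    have h0 : ⟪P l x, x - P l x⟫ = 0 := by
      rw [real_inner_comm]; exact horth l x
    rw [show P l x + (x - P l x) = x by abel, h0] at h
    linarith
  -- one-step descent
  have hstep' : ∀ s : ℕ,
      f (w (s + 1)) ≤ f (w s)
        + η / 2 * ∑ l, ‖g (w s) l - P l (g (w s) l)‖ ^ 2
        - η / 2 * ‖g (w s)‖ ^ 2 := by
    intro s
    set v := w s
    set G := g v with hG
    set Q := componentwiseProj P G with hQ
    have hdiffpt : w (s + 1) - v = -(η • Q) := by
      rw [hstep s]; abel
    have hs := hsmooth v (w (s + 1))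
    rw [hdiffpt] at hs
    have hinner : ⟪G, -(η • Q)⟫ = -(η * ⟪G, Q⟫) := by
      rw [inner_neg_right, real_inner_smul_right]
    have hGQ : ⟪G, Q⟫ = ‖Q‖ ^ 2 := by
      rw [PiLp.inner_apply, ← real_inner_self_eq_norm_sq, PiLp.inner_apply]
      refine Finset.sum_congr rfl fun l _ => ?_
      show ⟪G l, P l (G l)⟫ = ⟪P l (G l), P l (G l)⟫
      have := horth l (G l)
      have h2 : ⟪G l - P l (G l), P l (G l)⟫ = 0 := this
      have h3 : ⟪G l, P l (G l)⟫ = ⟪P l (G l), P l (G l)⟫ + ⟪G l - P l (G l), P l (G l)⟫ := by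
        rw [← inner_add_left]; congr 1; abel
      rw [h3, h2, add_zero]
    have hnorm : ‖-(η • Q)‖ ^ 2 = η ^ 2 * ‖Q‖ ^ 2 := by
      rw [norm_neg, norm_smul, mul_pow, Real.norm_eq_abs, sq_abs]
    rw [hinner, hGQ, hnorm] at hs
    have hQnn : (0:ℝ) ≤ ‖Q‖ ^ 2 := sq_nonneg _
    have hηLf : Lf * η ≤ 1 := by
      rw [← le_div_iff₀' hLf]; exact hη
    have hbound : f v - η * ‖Q‖ ^ 2 + Lf / 2 * (η ^ 2 * ‖Q‖ ^ 2)
        ≤ f v - η / 2 * ‖Q‖ ^ 2 := by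
      nlinarith [mul_nonneg (sub_nonneg.mpr hηLf) (mul_nonneg hη₀.le hQnn)]
    have hQsum : ‖Q‖ ^ 2 = ∑ l, ‖P l (G l)‖ ^ 2 := by
      rw [← real_inner_self_eq_norm_sq, PiLp.inner_apply]
      refine Finset.sum_congr rfl fun l _ => ?_
      rw [real_inner_self_eq_norm_sq]; rfl
    have hGsum : ‖G‖ ^ 2 = ∑ l, ‖G l‖ ^ 2 := by
      rw [← real_inner_self_eq_norm_sq, PiLp.inner_apply]
      exact Finset.sum_congr rfl fun l _ => real_inner_self_eq_norm_sq _
    have hdecomp : ‖G‖ ^ 2 = ‖Q‖ ^ 2 + ∑ l, ‖G l - P l (G l)‖ ^ 2 := by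
      rw [hGsum, hQsum, ← Finset.sum_add_distrib]
      exact Finset.sum_congr rfl fun l _ => hpyth l (G l)
    have : f (w (s + 1)) ≤ f v - η / 2 * ‖Q‖ ^ 2 := by
      calc f (w (s + 1)) ≤ f v + -(η * ‖Q‖ ^ 2) + Lf / 2 * (η ^ 2 * ‖Q‖ ^ 2) := hs
        _ ≤ f v - η / 2 * ‖Q‖ ^ 2 := by linarith [hbound]
    have hQeq : ‖Q‖ ^ 2 = ‖G‖ ^ 2 - ∑ l, ‖G l - P l (G l)‖ ^ 2 := by linarith [hdecomp]
    rw [hQeq] at this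
    linarith
  -- induction on S
  induction S with
  | zero => simp
  | succ S ih =>
    have h1 := hstep' S
    rw [Finset.sum_range_succ, Finset.sum_range_succ]
    linarith
end

section
/- Let E = Π_{l=1}^{L} E_l be a finite product of finite-dimensional real inner product spaces with the ℓ² product inner product, let K_l ⊆ E_l be subspaces with orthogonal projections P_l : E_l → E_l, and let P : E → E act componentwise by (P v)_l = P_l(v_l). Let f : E → ℝ be L_f-smooth with L_f > 0 and let 0 < η ≤ 1/L_f. Fix x ∈ E, let (Ω, μ) be a probability space, and let V : Ω → E be an integrable random vector with mean ∫ V dμ = P(∇f(x)) and variance ∫ ‖V(ω) − P(∇f(x))‖² dμ(ω) ≤ σ², such that ω ↦ f(x − η V(ω)) is integrable. Then ∫ f(x − η V(ω)) dμ(ω) ≤ f(x) − (η/2)·‖∇f(x)‖² + (η/2)·Σ_{l=1}^{L} ‖(∇f(x))_l − P_l((∇f(x))_l)‖² + (L_f/2)·η²·σ². -/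
open scoped RealInnerProductSpace
open MeasureTheory

/-- Stochastic descent lemma for projected gradients: if `f` is `L_f`-smooth on the `ℓ²`
product space `E = Π_l E_l`, `P_l` is the orthogonal projection onto `K_l ⊆ E_l`,
`0 < η ≤ 1/L_f`, and `V` is an integrable random vector with mean `P(∇f(x))` and variance
`∫ ‖V - P(∇f(x))‖² dμ ≤ σ²`, then
`∫ f(x - η V) dμ ≤ f(x) - (η/2)‖∇f(x)‖² + (η/2) Σ_l ‖(∇f(x))_l - P_l((∇f(x))_l)‖²
  + (L_f/2) η² σ²`. -/
theorem statement6 {L : ℕ} {E : Fin L → Type*}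
    [∀ l, NormedAddCommGroup (E l)] [∀ l, InnerProductSpace ℝ (E l)]
    [∀ l, FiniteDimensional ℝ (E l)]
    (K : ∀ l, Submodule ℝ (E l)) (P : ∀ l, E l →L[ℝ] E l)
    (hPrange : ∀ l, LinearMap.range (P l : E l →ₗ[ℝ] E l) = K l)
    (hPorth : ∀ l, ∀ v : E l, v - P l v ∈ (K l)ᗮ)
    (f : PiLp 2 E → ℝ) (g : PiLp 2 E → PiLp 2 E) (Lf : ℝ) (hLf : 0 < Lf)
    (hdiff : ∀ x, HasGradientAt f (g x) x)
    (hsmooth : ∀ v w : PiLp 2 E, f w ≤ f v + ⟪g v, w - v⟫ + Lf / 2 * ‖w - v‖ ^ 2)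
    (η : ℝ) (hη₀ : 0 < η) (hη : η ≤ 1 / Lf)
    (x : PiLp 2 E)
    {Ω : Type*} [MeasurableSpace Ω] (μ : Measure Ω) [IsProbabilityMeasure μ]
    (V : Ω → PiLp 2 E) (hVint : Integrable V μ)
    (hmean : (∫ ω, V ω ∂μ) = componentwiseProj P (g x))
    (hvarint : Integrable (fun ω => ‖V ω - componentwiseProj P (g x)‖ ^ 2) μ)
    (σ : ℝ) (hvar : (∫ ω, ‖V ω - componentwiseProj P (g x)‖ ^ 2 ∂μ) ≤ σ ^ 2)
    (hfint : Integrable (fun ω => f (x - η • V ω)) μ) :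
    (∫ ω, f (x - η • V ω) ∂μ) ≤
      f x - η / 2 * ‖g x‖ ^ 2 + η / 2 * ∑ l, ‖g x l - P l (g x l)‖ ^ 2
        + Lf / 2 * η ^ 2 * σ ^ 2 := by
  set G : PiLp 2 E := g x with hG
  set p : PiLp 2 E := componentwiseProj P G with hp
  -- orthogonality: ⟪G - p, p⟫ = 0
  have horth : ⟪G - p, p⟫ = 0 := by
    rw [PiLp.inner_apply]
    apply Finset.sum_eq_zero
    intro l _
    have h1 : (G - p) l = G l - P l (G l) := rfl
    have h2 : p l = P l (G l) := rfl
    rw [h1, h2, real_inner_comm]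
    exact (hPorth l (G l)) (P l (G l)) (by rw [← hPrange l]; exact ⟨G l, rfl⟩)
  have hGp : ⟪G, p⟫ = ‖p‖ ^ 2 := by
    have : ⟪G - p, p⟫ = ⟪G, p⟫ - ⟪p, p⟫ := by rw [inner_sub_left]
    rw [this] at horth
    rw [← real_inner_self_eq_norm_sq]
    linarith
  have hPyth : ‖G‖ ^ 2 = ‖G - p‖ ^ 2 + ‖p‖ ^ 2 := by
    have := norm_add_sq_real (G - p) p
    simp only [sub_add_cancel] at this
    rw [this, horth]; ring
  have hsum : ‖G - p‖ ^ 2 = ∑ l, ‖g x l - P l (g x l)‖ ^ 2 := by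
    rw [PiLp.norm_sq_eq_of_L2]
    congr 1
  -- pointwise bound
  have key : ∀ ω, f (x - η • V ω) ≤ f x - η * ⟪G, V ω⟫ + Lf / 2 * (η ^ 2 * ‖V ω‖ ^ 2) := by
    intro ω
    have h := hsmooth x (x - η • V ω)
    have h1 : (x - η • V ω) - x = -(η • V ω) := by abel
    rw [h1] at h
    rw [inner_neg_right, real_inner_smul_right, norm_neg, norm_smul, Real.norm_eq_abs,
      mul_pow, sq_abs] at h
    linarith [h]
  -- integrability
  have hI1 : Integrable (fun ω => ⟪G, V ω⟫) μ := hVint.const_inner G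
  have hB : Integrable (fun ω => 2 * ⟪V ω - p, p⟫) μ :=
    ((hVint.sub (integrable_const p)).inner_const p).const_mul 2
  have hA : Integrable (fun ω => ‖V ω - p‖ ^ 2 + 2 * ⟪V ω - p, p⟫) μ := hvarint.add hB
  have hI2 : Integrable (fun ω => ‖V ω‖ ^ 2) μ := by
    have hdecomp : ∀ ω, ‖V ω‖ ^ 2 = ‖V ω - p‖ ^ 2 + 2 * ⟪V ω - p, p⟫ + ‖p‖ ^ 2 := by
      intro ω
      have := norm_add_sq_real (V ω - p) p
      simpa [sub_add_cancel] using this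
    simp_rw [hdecomp]
    exact hA.add (integrable_const _)
  have hRHSint : Integrable (fun ω => f x - η * ⟪G, V ω⟫ + Lf / 2 * (η ^ 2 * ‖V ω‖ ^ 2)) μ := by
    exact ((integrable_const (f x)).sub (hI1.const_mul η)).add
      ((hI2.const_mul (η ^ 2)).const_mul (Lf / 2))
  have hmono := integral_mono hfint hRHSint key
  -- compute RHS integral
  have hInner : ∫ ω, ⟪G, V ω⟫ ∂μ = ‖p‖ ^ 2 := by
    rw [integral_inner hVint G, hmean, hGp]
  have hNorm : ∫ ω, ‖V ω‖ ^ 2 ∂μ ≤ σ ^ 2 + ‖p‖ ^ 2 := by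
    have hdecomp : ∀ ω, ‖V ω‖ ^ 2 = ‖V ω - p‖ ^ 2 + 2 * ⟪V ω - p, p⟫ + ‖p‖ ^ 2 := by
      intro ω
      have := norm_add_sq_real (V ω - p) p
      simpa [sub_add_cancel] using this
    have hzero : ∫ ω, ⟪V ω - p, p⟫ ∂μ = 0 := by
      have : ∀ ω, ⟪V ω - p, p⟫ = ⟪p, V ω⟫ - ⟪p, p⟫ := by
        intro ω; rw [inner_sub_left, real_inner_comm (V ω) p]
      simp_rw [this]
      rw [integral_sub (hVint.const_inner p) (integrable_const _), integral_inner hVint p,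
        hmean, integral_const, probReal_univ]
      simp
    calc ∫ ω, ‖V ω‖ ^ 2 ∂μ
        = ∫ ω, (‖V ω - p‖ ^ 2 + 2 * ⟪V ω - p, p⟫ + ‖p‖ ^ 2) ∂μ := by simp_rw [hdecomp]
      _ = (∫ ω, ‖V ω - p‖ ^ 2 ∂μ) + 2 * (∫ ω, ⟪V ω - p, p⟫ ∂μ) + ‖p‖ ^ 2 := by
          rw [integral_add hA (integrable_const _), integral_add hvarint hB,
            integral_const_mul, integral_const, probReal_univ]
          simp
      _ ≤ σ ^ 2 + ‖p‖ ^ 2 := by rw [hzero]; simpa using hvar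
  have hRHSval : ∫ ω, (f x - η * ⟪G, V ω⟫ + Lf / 2 * (η ^ 2 * ‖V ω‖ ^ 2)) ∂μ
      = f x - η * ‖p‖ ^ 2 + Lf / 2 * (η ^ 2 * ∫ ω, ‖V ω‖ ^ 2 ∂μ) := by
    have hC : Integrable (fun ω => f x - η * ⟪G, V ω⟫) μ :=
      (integrable_const (f x)).sub (hI1.const_mul η)
    have hD : Integrable (fun ω => Lf / 2 * (η ^ 2 * ‖V ω‖ ^ 2)) μ :=
      (hI2.const_mul (η ^ 2)).const_mul (Lf / 2)
    have hE : Integrable (fun ω => η * ⟪G, V ω⟫) μ := hI1.const_mul η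
    rw [integral_add hC hD, integral_sub (integrable_const (f x)) hE,
      integral_const, probReal_univ, integral_const_mul, integral_const_mul,
      integral_const_mul, hInner]
    simp
  rw [hRHSval] at hmono
  -- final arithmetic
  have hηLf : η * Lf ≤ 1 := by
    rw [le_div_iff₀ hLf] at hη; linarith
  have hnn : (0:ℝ) ≤ Lf / 2 * η ^ 2 := by positivity
  have hVbd : Lf / 2 * (η ^ 2 * ∫ ω, ‖V ω‖ ^ 2 ∂μ) ≤ Lf / 2 * (η ^ 2 * (σ ^ 2 + ‖p‖ ^ 2)) := by
    apply mul_le_mul_of_nonneg_left _ (by positivity)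
    exact mul_le_mul_of_nonneg_left hNorm (by positivity)
  have hfinal : f x - η * ‖p‖ ^ 2 + Lf / 2 * (η ^ 2 * (σ ^ 2 + ‖p‖ ^ 2))
      ≤ f x - η / 2 * ‖G‖ ^ 2 + η / 2 * ‖G - p‖ ^ 2 + Lf / 2 * η ^ 2 * σ ^ 2 := by
    rw [hPyth]
    have hp2 : (0:ℝ) ≤ ‖p‖ ^ 2 := by positivity
    nlinarith [mul_nonneg hη₀.le hp2]
  rw [← hsum]
  linarith
end
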